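/- Let p(x) be a real polynomial of degree at most d ≥ 1, let L ≥ d+1 be an integer, let Δ ∈ (0,1), and let a_0 < a_1 < ... < a_d be integers in {0,...,L-1}. Set x_j = -Δ + (2a_j/(L-1))·Δ. If |p(x_j)| ≤ ε for all j = 0,...,d, then |p(1)| ≤ ε·exp(d(1 + log((1+1/Δ)·(L-1)/d)))/√(2πd). -/

import Mathlib

open Polynomial Real Finset

lemma my_gap_lemma (a : ℕ → ℕ) (d : ℕ) (ha : StrictMonoOn a (Set.Iic d)) :
    ∀ n, n ≤ d → ∀ m, m ≤ n → a m + (n - m) ≤ a n := by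
  intro n
  induction n with
  | zero => intro _ m hm; interval_cases m; simp
  | succ k ih =>
    intro hn m hm
    rcases eq_or_lt_of_le hm with h | h
    · subst h; simp
    · have hmk : m ≤ k := by omega
      have h1 := ih (by omega) m hmk
      have h2 : a k < a (k + 1) :=
        ha (by simp; omega) (by simp; omega) (by omega)
      omega

lemma my_prod_abs_nat (d i : ℕ) (hi : i ≤ d) :
    ∏ j ∈ (Finset.range (d+1)).erase i, |(i:ℝ) - (j:ℝ)| =
      (Nat.factorial i : ℝ) * (Nat.factorial (d - i) : ℝ) := by
  have hsplit : (Finset.range (d+1)).erase i = Finset.range i ∪ Finset.Ico (i+1) (d+1) := by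
    ext j; simp only [Finset.mem_erase, Finset.mem_range, Finset.mem_union, Finset.mem_Ico]
    omega
  have hdisj : Disjoint (Finset.range i) (Finset.Ico (i+1) (d+1)) := by
    simp only [Finset.disjoint_left, Finset.mem_range, Finset.mem_Ico]
    omega
  rw [hsplit, Finset.prod_union hdisj]
  have h1 : ∏ j ∈ Finset.range i, |(i:ℝ) - (j:ℝ)| = (Nat.factorial i : ℝ) := by
    have e1 : ∀ j ∈ Finset.range i, |(i:ℝ) - (j:ℝ)| = ((i - j : ℕ) : ℝ) := by
      intro j hj
      rw [Finset.mem_range] at hj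
      rw [Nat.cast_sub hj.le, abs_of_nonneg (by
        have : (j:ℝ) ≤ i := by exact_mod_cast hj.le
        linarith)]
    rw [Finset.prod_congr rfl e1, ← Nat.cast_prod]
    congr 1
    calc ∏ j ∈ Finset.range i, (i - j)
        = ∏ j ∈ Finset.range i, (i - (i - 1 - j)) := (Finset.prod_range_reflect _ i).symm
      _ = ∏ j ∈ Finset.range i, (j + 1) := Finset.prod_congr rfl (fun j hj => by
          rw [Finset.mem_range] at hj; omega)
      _ = Nat.factorial i := Finset.prod_range_add_one_eq_factorial i
  have h2 : ∏ j ∈ Finset.Ico (i+1) (d+1), |(i:ℝ) - (j:ℝ)| = (Nat.factorial (d - i) : ℝ) := by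
    have e2 : ∀ j ∈ Finset.Ico (i+1) (d+1), |(i:ℝ) - (j:ℝ)| = ((j - i : ℕ) : ℝ) := by
      intro j hj
      rw [Finset.mem_Ico] at hj
      rw [Nat.cast_sub (by omega), abs_sub_comm, abs_of_nonneg (by
        have : (i:ℝ) ≤ j := by exact_mod_cast (by omega : i ≤ j)
        linarith)]
    rw [Finset.prod_congr rfl e2, ← Nat.cast_prod]
    congr 1
    rw [Finset.prod_Ico_eq_prod_range]
    calc ∏ j ∈ Finset.range (d + 1 - (i + 1)), (i + 1 + j - i)
        = ∏ j ∈ Finset.range (d - i), (j + 1) := by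
          rw [(by omega : d + 1 - (i + 1) = d - i)]
          exact Finset.prod_congr rfl (fun j _ => by omega)
      _ = Nat.factorial (d - i) := Finset.prod_range_add_one_eq_factorial _
  rw [h1, h2]

lemma my_stirling (d : ℕ) (hd : 1 ≤ d) :
    Real.sqrt (2 * π * d) * ((d : ℝ) / Real.exp 1) ^ d ≤ (Nat.factorial d : ℝ) := by
  have h1 : Real.sqrt π ≤ Stirling.stirlingSeq d := by
    obtain ⟨k, rfl⟩ : ∃ k, d = k + 1 := ⟨d - 1, by omega⟩
    exact Stirling.stirlingSeq'_antitone.le_of_tendsto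
      (Stirling.tendsto_stirlingSeq_sqrt_pi.comp (Filter.tendsto_add_atTop_nat 1)) k
  have hd0 : (0:ℝ) < d := by exact_mod_cast hd
  have hden : 0 < Real.sqrt (2 * d) * ((d : ℝ) / Real.exp 1) ^ d := by positivity
  rw [Stirling.stirlingSeq, le_div_iff₀ hden] at h1
  calc Real.sqrt (2 * π * d) * ((d : ℝ) / Real.exp 1) ^ d
      = Real.sqrt π * (Real.sqrt (2 * d) * ((d : ℝ) / Real.exp 1) ^ d) := by
        rw [show (2:ℝ) * π * d = π * (2 * d) by ring, Real.sqrt_mul pi_pos.le]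
        ring
    _ ≤ (Nat.factorial d : ℝ) := h1

theorem lagrange_extrapolation_subset (p : Polynomial ℝ) (d L : ℕ) (ε Δ : ℝ)
    (a : ℕ → ℕ)
    (hd1 : 1 ≤ d) (hd : p.natDegree ≤ d) (hL : d + 1 ≤ L)
    (hΔ0 : 0 < Δ) (hΔ1 : Δ < 1)
    (ha : StrictMonoOn a (Set.Iic d)) (haL : ∀ j ≤ d, a j ≤ L - 1)
    (hb : ∀ j : ℕ, j ≤ d → |p.eval (-Δ + (2 * (a j) / (L - 1 : ℝ)) * Δ)| ≤ ε) :
    |p.eval 1| ≤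
      ε * Real.exp (d * (1 + Real.log ((1 + 1 / Δ) * (L - 1 : ℝ) / d))) /
        Real.sqrt (2 * π * d) := by
  set v : ℕ → ℝ := fun j => -Δ + (2 * (a j) / ((L:ℝ) - 1)) * Δ with hv
  have hdR : (1:ℝ) ≤ (d:ℝ) := by exact_mod_cast hd1
  have hL1 : (1:ℝ) ≤ (L:ℝ) - 1 := by
    have : ((d:ℝ)) + 1 ≤ (L:ℝ) := by exact_mod_cast hL
    linarith
  have hLpos : (0:ℝ) < (L:ℝ) - 1 := by linarith
  set c : ℝ := 2 * Δ / ((L:ℝ) - 1) with hc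
  have hcpos : 0 < c := by positivity
  have hvd : ∀ i j : ℕ, v i - v j = c * ((a i : ℝ) - (a j : ℝ)) := by
    intro i j
    simp only [hv, hc]
    field_simp
    ring
  have hε : 0 ≤ ε := le_trans (abs_nonneg _) (hb 0 (by omega))
  -- gaps
  have hgap : ∀ i j : ℕ, i ≤ d → j ≤ d → |(i:ℝ) - (j:ℝ)| ≤ |(a i : ℝ) - (a j : ℝ)| := by
    have key : ∀ i j : ℕ, i ≤ d → j ≤ d → i ≤ j →
        |(i:ℝ) - (j:ℝ)| ≤ |(a i : ℝ) - (a j : ℝ)| := by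
      intro i j hi hj hij
      have h1 : a i + (j - i) ≤ a j := my_gap_lemma a d ha j hj i hij
      have h2 : ((j:ℝ) - i) ≤ (a j : ℝ) - a i := by
        have : ((a i + (j - i) : ℕ) : ℝ) ≤ ((a j : ℕ) : ℝ) := by exact_mod_cast h1
        rw [Nat.cast_add, Nat.cast_sub hij] at this
        linarith
      have hiR : (i:ℝ) ≤ j := by exact_mod_cast hij
      rw [abs_sub_comm, abs_of_nonneg (by linarith), abs_sub_comm,
        abs_of_nonneg (by linarith)]
      exact h2
    intro i j hi hj
    rcases le_total i j with h | h
    · exact key i j hi hj h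
    · rw [abs_sub_comm, abs_sub_comm (a i : ℝ)]; exact key j i hj hi h
  -- node positions
  have hvmem : ∀ j : ℕ, j ≤ d → -Δ ≤ v j ∧ v j ≤ Δ := by
    intro j hj
    have haj : (a j : ℝ) ≤ (L:ℝ) - 1 := by
      have h1 : a j ≤ L - 1 := haL j hj
      have h2 : ((a j : ℕ) : ℝ) ≤ ((L - 1 : ℕ) : ℝ) := by exact_mod_cast h1
      rw [Nat.cast_sub (by omega), Nat.cast_one] at h2
      exact h2
    have h0 : (0:ℝ) ≤ 2 * (a j) / ((L:ℝ) - 1) := by positivity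
    have h2 : 2 * (a j : ℝ) / ((L:ℝ) - 1) ≤ 2 := by
      rw [div_le_iff₀ hLpos]; linarith
    constructor
    · simp only [hv]; nlinarith
    · simp only [hv]; nlinarith
  have h1v : ∀ j : ℕ, j ≤ d → |1 - v j| ≤ 1 + Δ := by
    intro j hj
    obtain ⟨hl, hr⟩ := hvmem j hj
    rw [abs_of_nonneg (by linarith)]
    linarith
  -- injectivity
  have hinj : Set.InjOn v (Finset.range (d+1) : Set ℕ) := by
    intro i hi j hj hvij
    simp only [Finset.coe_range, Set.mem_Iio] at hi hj
    have : c * ((a i : ℝ) - (a j : ℝ)) = 0 := by rw [← hvd]; linarith [hvij]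
    have haij : (a i : ℝ) = (a j : ℝ) := by
      rcases mul_eq_zero.mp this with h | h
      · exact absurd h hcpos.ne'
      · linarith
    have : a i = a j := by exact_mod_cast haij
    exact ha.injOn (by simp; omega) (by simp; omega) this
  -- interpolation
  have hdeg : p.degree < (Finset.range (d+1)).card := by
    rw [Finset.card_range]
    refine lt_of_le_of_lt degree_le_natDegree ?_
    exact_mod_cast Nat.lt_succ_of_le hd
  have hip := Lagrange.eq_interpolate hinj hdeg
  have key : p.eval 1 = ∑ i ∈ Finset.range (d+1),
      p.eval (v i) * ∏ j ∈ (Finset.range (d+1)).erase i, ((v i - v j)⁻¹ * (1 - v j)) := by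
    conv_lhs => rw [hip]
    rw [Lagrange.interpolate_apply, eval_finset_sum]
    refine Finset.sum_congr rfl fun i _ => ?_
    rw [eval_mul, eval_C, Lagrange.basis, eval_prod]
    congr 1
    refine Finset.prod_congr rfl fun j _ => ?_
    simp [Lagrange.basisDivisor]
  -- per-node product bound
  have hprod : ∀ i ∈ Finset.range (d+1),
      ∏ j ∈ (Finset.range (d+1)).erase i, |(v i - v j)⁻¹ * (1 - v j)| ≤
        ((1+Δ)/c)^d * (((i.factorial : ℝ)) * (((d-i).factorial : ℝ)))⁻¹ := by
    intro i hi
    have hi' : i ≤ d := Finset.mem_range_succ_iff.mp hi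
    have step : ∀ j ∈ (Finset.range (d+1)).erase i,
        |(v i - v j)⁻¹ * (1 - v j)| ≤ (c * |(i:ℝ) - (j:ℝ)|)⁻¹ * (1+Δ) := by
      intro j hj
      obtain ⟨hji, hjr⟩ := Finset.mem_erase.mp hj
      have hj' : j ≤ d := Finset.mem_range_succ_iff.mp hjr
      have habs : 0 < |(i:ℝ) - (j:ℝ)| := by
        rw [abs_pos, sub_ne_zero]
        intro h
        exact hji (by exact_mod_cast h.symm)
      have hlow : c * |(i:ℝ) - (j:ℝ)| ≤ |v i - v j| := by
        rw [hvd, abs_mul, abs_of_pos hcpos]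
        exact mul_le_mul_of_nonneg_left (hgap i j hi' hj') hcpos.le
      have hpos : 0 < c * |(i:ℝ) - (j:ℝ)| := mul_pos hcpos habs
      rw [abs_mul, abs_inv]
      exact mul_le_mul (inv_anti₀ hpos hlow) (h1v j hj') (abs_nonneg _) (by positivity)
    have hcard : ((Finset.range (d+1)).erase i).card = d := by
      rw [Finset.card_erase_of_mem hi, Finset.card_range]
      omega
    calc ∏ j ∈ (Finset.range (d+1)).erase i, |(v i - v j)⁻¹ * (1 - v j)|
        ≤ ∏ j ∈ (Finset.range (d+1)).erase i, (c * |(i:ℝ) - (j:ℝ)|)⁻¹ * (1+Δ) :=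
          Finset.prod_le_prod (fun j _ => abs_nonneg _) step
      _ = (∏ j ∈ (Finset.range (d+1)).erase i, (c * |(i:ℝ) - (j:ℝ)|))⁻¹ * (1+Δ)^d := by
          rw [Finset.prod_mul_distrib, Finset.prod_const, hcard, Finset.prod_inv_distrib]
      _ = (c^d * ((i.factorial : ℝ) * ((d-i).factorial : ℝ)))⁻¹ * (1+Δ)^d := by
          rw [Finset.prod_mul_distrib, Finset.prod_const, hcard, my_prod_abs_nat d i hi']
      _ = ((1+Δ)/c)^d * (((i.factorial : ℝ)) * (((d-i).factorial : ℝ)))⁻¹ := by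
          have hcne : c ≠ 0 := hcpos.ne'
          have hF1 : (i.factorial : ℝ) ≠ 0 := by positivity
          have hF2 : ((d-i).factorial : ℝ) ≠ 0 := by positivity
          clear_value c
          rw [div_pow]
          ring
  -- sum of reciprocal factorial products
  have hfacne : ((d.factorial : ℝ)) ≠ 0 := by positivity
  have hsum : ∑ i ∈ Finset.range (d+1), ((i.factorial : ℝ) * ((d-i).factorial : ℝ))⁻¹ =
      2^d / (d.factorial : ℝ) := by
    have e : ∀ i ∈ Finset.range (d+1), ((i.factorial : ℝ) * ((d-i).factorial : ℝ))⁻¹ =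
        (d.choose i : ℝ) / (d.factorial : ℝ) := by
      intro i hi
      have hi' : i ≤ d := Finset.mem_range_succ_iff.mp hi
      rw [Nat.cast_choose ℝ hi']
      have h1 : ((i.factorial : ℝ)) ≠ 0 := by positivity
      have h2 : (((d-i).factorial : ℝ)) ≠ 0 := by positivity
      field_simp
    rw [Finset.sum_congr rfl e, ← Finset.sum_div, ← Nat.cast_sum, Nat.sum_range_choose]
    push_cast
    ring
  -- main intermediate bound
  set M : ℝ := (1 + 1/Δ) * ((L:ℝ) - 1) with hM
  have hMpos : 0 < M := by
    have : 0 < 1 + 1/Δ := by positivity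
    exact mul_pos this hLpos
  have hMeq : ((1+Δ)/c)^d * (2:ℝ)^d = M^d := by
    rw [← mul_pow]
    congr 1
    rw [hc, hM]
    field_simp
    ring
  have hmain : |p.eval 1| ≤ ε * M^d / (d.factorial : ℝ) := by
    calc |p.eval 1| = |∑ i ∈ Finset.range (d+1),
          p.eval (v i) * ∏ j ∈ (Finset.range (d+1)).erase i, ((v i - v j)⁻¹ * (1 - v j))| := by
            rw [key]
      _ ≤ ∑ i ∈ Finset.range (d+1),
          |p.eval (v i) * ∏ j ∈ (Finset.range (d+1)).erase i, ((v i - v j)⁻¹ * (1 - v j))| :=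
            Finset.abs_sum_le_sum_abs _ _
      _ ≤ ∑ i ∈ Finset.range (d+1),
          ε * ((1+Δ)/c)^d * ((i.factorial : ℝ) * ((d-i).factorial : ℝ))⁻¹ := by
          refine Finset.sum_le_sum fun i hi => ?_
          have hi' : i ≤ d := Finset.mem_range_succ_iff.mp hi
          rw [abs_mul, abs_prod, mul_assoc]
          exact mul_le_mul (hb i hi') (hprod i hi)
            (Finset.prod_nonneg fun j _ => abs_nonneg _) hε
      _ = ε * ((1+Δ)/c)^d * (2^d / (d.factorial : ℝ)) := by
          rw [← Finset.mul_sum, hsum]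
      _ = ε * M^d / (d.factorial : ℝ) := by
          rw [← hMeq]
          ring
  -- Stirling step
  have hstir := my_stirling d hd1
  have hd0 : (0:ℝ) < d := by linarith
  have hMd : 0 < M / d := by positivity
  have hexp : Real.exp ((d:ℝ) * (1 + Real.log (M / d))) = M^d / ((d:ℝ) / Real.exp 1)^d := by
    rw [mul_add, mul_one, Real.exp_add, Real.exp_nat_mul, Real.exp_log hMd]
    rw [← Real.exp_one_rpow (d:ℝ), Real.rpow_natCast]
    have he : (0:ℝ) < Real.exp 1 := Real.exp_pos 1
    rw [div_pow, div_pow]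
    field_simp
  have hfinal : ε * M^d / (d.factorial : ℝ) ≤
      ε * Real.exp ((d:ℝ) * (1 + Real.log (M / d))) / Real.sqrt (2 * π * d) := by
    rw [hexp]
    have hde : (0:ℝ) < (d:ℝ) / Real.exp 1 := div_pos hd0 (Real.exp_pos 1)
    have hsq : (0:ℝ) < Real.sqrt (2 * π * d) :=
      Real.sqrt_pos.mpr (mul_pos (mul_pos two_pos pi_pos) hd0)
    have hden : (0:ℝ) < ((d:ℝ) / Real.exp 1)^d * Real.sqrt (2 * π * d) :=
      mul_pos (pow_pos hde d) hsq
    have hrw : ε * (M^d / ((d:ℝ) / Real.exp 1)^d) / Real.sqrt (2 * π * d) =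
        ε * M^d / (((d:ℝ) / Real.exp 1)^d * Real.sqrt (2 * π * d)) := by
      ring
    rw [hrw]
    refine div_le_div_of_nonneg_left (by positivity) hden ?_
    calc ((d:ℝ) / Real.exp 1)^d * Real.sqrt (2 * π * d)
        = Real.sqrt (2 * π * d) * ((d:ℝ) / Real.exp 1)^d := by ring
      _ ≤ (d.factorial : ℝ) := hstir
  calc |p.eval 1| ≤ ε * M^d / (d.factorial : ℝ) := hmain
    _ ≤ _ := hfinal
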